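/- Let C be a finite candidate set, L a linear order on C, and c ∈ C a candidate such that at least two candidates are strictly below c in L and at least two candidates are strictly above c in L. Then no linear-order vote on C that is within one adjacent swap of some linear order single-peaked with respect to L ranks c last. -/

import Mathlib

variable {α : Type*} [DecidableEq α]

/-- `l` is a linear-order vote on the finite candidate set `s`:
a duplicate-free list containing exactly the elements of `s`;
earlier in the list means more preferred (for a societal axis `L`,
earlier in the list means smaller in the order `L`). -/
def IsVoteOn (s : Finset α) (l : List α) : Prop :=
  l.Nodup ∧ ∀ a, a ∈ l ↔ a ∈ s

/-- `a` is ranked strictly before `b` in the list `l`. -/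
def Prefers (l : List α) (a b : α) : Prop :=
  l.idxOf a < l.idxOf b

instance (l : List α) (a b : α) : Decidable (Prefers l a b) :=
  inferInstanceAs (Decidable ((_ : ℕ) < _))

/-- `v` is single-peaked with respect to the societal axis `L`. -/
def SinglePeaked (L v : List α) : Prop :=
  ∀ c1 c2 c3, c1 ∈ L → c2 ∈ L → c3 ∈ L →
    ((Prefers L c1 c2 ∧ Prefers L c2 c3) ∨ (Prefers L c3 c2 ∧ Prefers L c2 c1)) →
    Prefers v c1 c2 → Prefers v c2 c3

/-- `v` is single-caved with respect to the societal axis `L`. -/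
def SingleCaved (L v : List α) : Prop :=
  ∀ c1 c2 c3, c1 ∈ L → c2 ∈ L → c3 ∈ L →
    ((Prefers L c1 c2 ∧ Prefers L c2 c3) ∨ (Prefers L c3 c2 ∧ Prefers L c2 c1)) →
    Prefers v c2 c1 → Prefers v c3 c2

/-- The restriction of a ranking/order `l` to the subset `C` of candidates. -/
def restrictList (C : Finset α) (l : List α) : List α :=
  l.filter (fun a => decide (a ∈ C))

/-- The plurality score of candidate `c` in the election with candidate set `C`
and votes `V` (each vote a linear order on a set containing `C`): the number of
votes whose most preferred candidate among `C` is `c`. -/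
def pluralityScore (C : Finset α) (V : List (List α)) (c : α) : ℕ :=
  V.countP (fun v => decide ((restrictList C v).head? = some c))

/-- `p` is a plurality winner of the election `(C, V)`. -/
def PluralityWinner (C : Finset α) (V : List (List α)) (p : α) : Prop :=
  p ∈ C ∧ ∀ c ∈ C, pluralityScore C V c ≤ pluralityScore C V p

/-- `l'` is obtained from `l` by one swap of adjacent elements. -/
def AdjSwap (l l' : List α) : Prop :=
  ∃ (u w : List α) (x y : α), l = u ++ x :: y :: w ∧ l' = u ++ y :: x :: w

/-- `WithinSwaps k l l'` : `l` can be transformed into `l'` by a sequence of at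
most `k` adjacent swaps. -/
def WithinSwaps : ℕ → List α → List α → Prop
  | 0, l, l' => l = l'
  | (k+1), l, l' => l = l' ∨ ∃ l'', AdjSwap l l'' ∧ WithinSwaps k l'' l'

/-- `v` is swoon-SP w.r.t. axis `L` on candidate set `C`: the restriction of `v` to
`C` minus `v`'s most preferred candidate is single-peaked with respect to the
restriction of `L` to that set. -/
def SwoonSP (C : Finset α) (L v : List α) : Prop :=
  ∀ t, v.head? = some t →
    SinglePeaked (restrictList (C.erase t) L) (restrictList (C.erase t) v)

/-- The `k`-radius neighborhood of `c` with respect to `C'` and the axis `L`: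
if `C'`, listed in `L`-increasing order, is `d_1, ..., d_r` and `c = d_i`, this
is `{d_j : |i - j| ≤ k}`. -/
def nbhd (k : ℕ) (L : List α) (C' : Finset α) (c : α) : Finset α :=
  ((restrictList C' L).drop ((restrictList C' L).idxOf c - k)).take
    ((restrictList C' L).idxOf c + k + 1 - ((restrictList C' L).idxOf c - k))
    |>.toFinset

/-- The plurality election `(C, V)` is `k`-local with respect to axis `L`. -/
def KLocal (k : ℕ) (L : List α) (C : Finset α) (V : List (List α)) : Prop :=
  ∀ C' ⊆ C, ∀ c ∈ C', pluralityScore (nbhd k L C' c) V c = pluralityScore C' V c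

/-- In a `(a1, a2, 0)` scoring election over three candidates, the number of points
candidate `c` receives from (unit-weight) vote `v`. -/
def score3 (a1 a2 : ℕ) (v : List α) (c : α) : ℕ :=
  if v.idxOf c = 0 then a1 else if v.idxOf c = 1 then a2 else 0

/-- Indicator that the vote `v` does not veto (rank last) candidate `c`. -/
def vetoInd (v : List α) (c : α) : ℕ :=
  if v.getLast? = some c then 0 else 1

/-- The approval score of `c` given approval ballots `W`. -/
def approvalScore {I : Type*} [Fintype I] (W : I → Finset α) (c : α) : ℕ :=
  (Finset.univ.filter fun i => c ∈ W i).card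

/-- `p` is an approval winner of the election with candidate set `C` and ballots `W`. -/
def ApprovalWinner (C : Finset α) {I : Type*} [Fintype I] (W : I → Finset α) (p : α) : Prop :=
  p ∈ C ∧ ∀ c ∈ C, approvalScore W c ≤ approvalScore W p


lemma prefers_mid {u w : List α} {c e : α} (hnd : (u ++ c :: w).Nodup)
    (he : e ∈ u) : Prefers (u ++ c :: w) e c := by
  have hc : c ∉ u := fun hu =>
    (List.disjoint_of_nodup_append hnd) hu (List.mem_cons_self (a := c) (l := w))
  unfold Prefers
  rw [List.idxOf_append_of_mem he, List.idxOf_append_of_notMem hc]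
  simp
  exact List.idxOf_lt_length_iff.2 he

lemma exists_concat_of_getLast? {l : List α} {z : α} (h : l.getLast? = some z) :
    ∃ u, l = u ++ [z] := by
  cases l with
  | nil => simp at h
  | cons a t =>
    have hne : (a :: t) ≠ [] := List.cons_ne_nil a t
    rw [List.getLast?_eq_getLast hne] at h
    refine ⟨(a :: t).dropLast, ?_⟩
    rw [← Option.some_inj.1 h]
    exact (List.dropLast_concat_getLast hne).symm

lemma last_least {v : List α} (hnd : v.Nodup) {z a : α}
    (hz : v.getLast? = some z) (ha : a ∈ v) (hne : a ≠ z) : Prefers v a z := by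
  obtain ⟨u, rfl⟩ := exists_concat_of_getLast? hz
  have : a ∈ u := by
    rcases List.mem_append.1 ha with h | h
    · exact h
    · simp at h; exact absurd h hne
  exact prefers_mid hnd this

lemma ne_of_prefers {l : List α} {a b : α} (h : Prefers l a b) : a ≠ b := by
  rintro rfl; exact lt_irrefl (α := ℕ) _ h

lemma sp_last_not_interior {L v : List α} (hnd : v.Nodup) (hsp : SinglePeaked L v)
    {a c d : α} (haL : a ∈ L) (hcL : c ∈ L) (hdL : d ∈ L)
    (hav : a ∈ v) (hdv : d ∈ v)
    (h1 : Prefers L a c) (h2 : Prefers L c d) (hlast : v.getLast? = some c) : False := by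
  have hac : a ≠ c := ne_of_prefers h1
  have hdc : d ≠ c := (ne_of_prefers h2).symm
  have hpac : Prefers v a c := last_least hnd hlast hav hac
  have hpcd : Prefers v c d := hsp a c d haL hcL hdL (Or.inl ⟨h1, h2⟩) hpac
  have hpdc : Prefers v d c := last_least hnd hlast hdv hdc
  exact lt_asymm (α := ℕ) hpcd hpdc

/-- If at least two candidates lie strictly below `c` in the axis `L` and
at least two lie strictly above, then no vote that is within one adjacent swap of some
order single-peaked w.r.t. `L` ranks `c` last. -/
theorem dodgson1SP_interior_never_vetoed
    (C : Finset α) (L : List α) (hL : IsVoteOn C L) (c : α) (hc : c ∈ C)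
    (hbelow : ∃ a ∈ C, ∃ b ∈ C, a ≠ b ∧ Prefers L a c ∧ Prefers L b c)
    (habove : ∃ a ∈ C, ∃ b ∈ C, a ≠ b ∧ Prefers L c a ∧ Prefers L c b)
    (v : List α) (hv : IsVoteOn C v)
    (hd : ∃ v', IsVoteOn C v' ∧ SinglePeaked L v' ∧ WithinSwaps 1 v v') :
    v.getLast? ≠ some c := by
  intro hlast
  obtain ⟨a, haC, b, hbC, hab, hac, hbc⟩ := hbelow
  obtain ⟨d, hdC, e, heC, hde, hcd, hce⟩ := habove
  obtain ⟨v', hv', hsp, hw⟩ := hd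
  have hcL := (hL.2 c).2 hc
  have mem' : ∀ x ∈ C, x ∈ v' := fun x hx => (hv'.2 x).2 hx
  have key : v'.getLast? ≠ some c := fun h =>
    sp_last_not_interior hv'.1 hsp ((hL.2 a).2 haC) hcL ((hL.2 d).2 hdC)
      (mem' a haC) (mem' d hdC) hac hcd h
  rcases hw with rfl | ⟨v'', hswap, hv''⟩
  · exact key hlast
  · obtain rfl : v'' = v' := hv''
    obtain ⟨u, w, x, y, rfl, rfl⟩ := hswap
    cases w with
    | cons t ts =>
      apply key
      rw [show u ++ y :: x :: t :: ts = (u ++ [y, x]) ++ t :: ts by simp,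
        List.getLast?_append_cons]
      rw [show u ++ x :: y :: t :: ts = (u ++ [x, y]) ++ t :: ts by simp,
        List.getLast?_append_cons] at hlast
      exact hlast
    | nil =>
      obtain rfl : c = y := by
        rw [show u ++ [x, y] = (u ++ [x]) ++ [y] by simp, List.getLast?_concat] at hlast
        exact (Option.some_inj.1 hlast).symm
      obtain ⟨a', ha'C, ha'x, ha'c⟩ : ∃ a', a' ∈ C ∧ a' ≠ x ∧ Prefers L a' c := by
        by_cases hax : a = x
        · exact ⟨b, hbC, fun hbx => hab (hax.trans hbx.symm), hbc⟩
        · exact ⟨a, haC, hax, hac⟩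
      obtain ⟨d', hd'C, hd'x, hcd'⟩ : ∃ d', d' ∈ C ∧ d' ≠ x ∧ Prefers L c d' := by
        by_cases hdx : d = x
        · exact ⟨e, heC, fun hex => hde (hdx.trans hex.symm), hce⟩
        · exact ⟨d, hdC, hdx, hcd⟩
      have hnd' : (u ++ c :: x :: []).Nodup := by simpa using hv'.1
      have ha'u : a' ∈ u := by
        have := mem' a' ha'C
        rcases (by simpa using this : a' ∈ u ∨ a' = c ∨ a' = x) with h | h | h
        · exact h
        · exact absurd h (ne_of_prefers ha'c)
        · exact absurd h ha'x
      have hd'u : d' ∈ u := by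
        have := mem' d' hd'C
        rcases (by simpa using this : d' ∈ u ∨ d' = c ∨ d' = x) with h | h | h
        · exact h
        · exact absurd h (ne_of_prefers hcd').symm
        · exact absurd h hd'x
      have hpa'c : Prefers (u ++ c :: x :: []) a' c := prefers_mid hnd' ha'u
      have hpd'c : Prefers (u ++ c :: x :: []) d' c := prefers_mid hnd' hd'u
      have hpcd' : Prefers (u ++ [c, x]) c d' :=
        hsp a' c d' ((hL.2 a').2 ha'C) hcL ((hL.2 d').2 hd'C)
          (Or.inl ⟨ha'c, hcd'⟩) hpa'c
      exact lt_asymm (α := ℕ) hpcd' hpd'c
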